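/- arXiv:2202.03791 — 4 statements merged into one kernel-verified Lean document; each statement's English description precedes it below -/
import Mathlib

section
/- Let P and Q be labelled iposets with T_P = S_Q (matched via the unique isomorphism of totally ordered labelled sets). Then the width of the gluing composition P * Q equals max(wid(P), wid(Q)). -/
attribute [local instance] Classical.propDecidable

/-- A labelled iposet: a finite carrier `α` with a strict (partial) precedence
order `lt`, a labelling `lab : α → Λ`, and source/target interfaces `S, T ⊆ α`
whose elements are minimal resp. maximal. -/
structure LIP (Λ α : Type) where
  lt : α → α → Prop
  lt_irrefl : ∀ x, ¬ lt x x
  lt_trans : ∀ x y z, lt x y → lt y z → lt x z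
  lab : α → Λ
  S : Set α
  T : Set α
  S_min : ∀ s ∈ S, ∀ x, ¬ lt x s
  T_max : ∀ t ∈ T, ∀ x, ¬ lt t x

/-- Width: maximal cardinality of an antichain for the precedence order. -/
noncomputable def LIP.width {Λ α : Type} [Fintype α] (P : LIP Λ α) : ℕ :=
  ((Finset.univ : Finset α).powerset.filter
    (fun s => ∀ x ∈ s, ∀ y ∈ s, ¬ P.lt x y)).sup Finset.card

/-- `R`, together with the structural inclusions `i : α → γ` and `j : β → γ`,
is the gluing composition of `P` and `Q`: the carriers are identified exactly
along `T_P = S_Q` (via a label-preserving pairing), the precedence order is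
generated by those of `P`, `Q` plus `x < y` for `x ∈ P \\ T_P`, `y ∈ Q \\ S_Q`,
the interfaces are `S_P` and `T_Q`, and labels are inherited. -/
def IsGluing {Λ α β γ : Type} (P : LIP Λ α) (Q : LIP Λ β) (R : LIP Λ γ)
    (i : α → γ) (j : β → γ) : Prop :=
  Function.Injective i ∧ Function.Injective j ∧
  (∀ c : γ, (∃ a, i a = c) ∨ (∃ b, j b = c)) ∧
  (∀ a b, i a = j b → a ∈ P.T ∧ b ∈ Q.S) ∧
  (∀ a ∈ P.T, ∃ b ∈ Q.S, i a = j b) ∧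
  (∀ b ∈ Q.S, ∃ a ∈ P.T, i a = j b) ∧
  (∀ a b, i a = j b → P.lab a = Q.lab b) ∧
  (∀ x y, R.lt x y ↔
    ((∃ a a', x = i a ∧ y = i a' ∧ P.lt a a') ∨
     (∃ b b', x = j b ∧ y = j b' ∧ Q.lt b b') ∨
     (∃ a b, x = i a ∧ y = j b ∧ a ∉ P.T ∧ b ∉ Q.S))) ∧
  R.S = i '' P.S ∧ R.T = j '' Q.T ∧
  (∀ a, R.lab (i a) = P.lab a) ∧ (∀ b, R.lab (j b) = Q.lab b)

/-- The width of a gluing composition is the maximum of the widths. -/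
theorem width_glue {Λ α β γ : Type} [Fintype α] [Fintype β] [Fintype γ]
    (P : LIP Λ α) (Q : LIP Λ β) (R : LIP Λ γ) (i : α → γ) (j : β → γ)
    (h : IsGluing P Q R i j) :
    R.width = max P.width Q.width := by

  obtain ⟨hi, hj, hcov, hmeet, hTS, hST, hlab, hlt, hrest⟩ := h
  have liftP : ∀ a a', R.lt (i a) (i a') ↔ P.lt a a' := by
    intro a a'
    rw [hlt]
    constructor
    · rintro (⟨a₁, a₁', e1, e2, hl⟩ | ⟨b, b', e1, e2, hl⟩ | ⟨a₁, b, e1, e2, hna, hnb⟩)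
      · obtain rfl := hi e1; obtain rfl := hi e2; exact hl
      · exact absurd hl (Q.S_min _ (hmeet _ _ e2).2 _)
      · exact absurd (hmeet _ _ e2).2 hnb
    · intro hl; exact Or.inl ⟨a, a', rfl, rfl, hl⟩
  have liftQ : ∀ b b', R.lt (j b) (j b') ↔ Q.lt b b' := by
    intro b b'
    rw [hlt]
    constructor
    · rintro (⟨a, a', e1, e2, hl⟩ | ⟨b₁, b₁', e1, e2, hl⟩ | ⟨a, b₁, e1, e2, hna, hnb⟩)
      · exact absurd hl (P.T_max _ (hmeet _ _ e1.symm).1 _)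
      · obtain rfl := hj e1; obtain rfl := hj e2; exact hl
      · exact absurd (hmeet _ _ e1.symm).1 hna
    · intro hl; exact Or.inr (Or.inl ⟨b, b', rfl, rfl, hl⟩)
  -- bound helpers
  have widP : ∀ s : Finset α, (∀ x ∈ s, ∀ y ∈ s, ¬ P.lt x y) → s.card ≤ P.width := by
    intro s hs
    exact Finset.le_sup (Finset.mem_filter.mpr ⟨Finset.mem_powerset.mpr (Finset.subset_univ s), hs⟩)
  have widQ : ∀ s : Finset β, (∀ x ∈ s, ∀ y ∈ s, ¬ Q.lt x y) → s.card ≤ Q.width := by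
    intro s hs
    exact Finset.le_sup (Finset.mem_filter.mpr ⟨Finset.mem_powerset.mpr (Finset.subset_univ s), hs⟩)
  have widR : ∀ s : Finset γ, (∀ x ∈ s, ∀ y ∈ s, ¬ R.lt x y) → s.card ≤ R.width := by
    intro s hs
    exact Finset.le_sup (Finset.mem_filter.mpr ⟨Finset.mem_powerset.mpr (Finset.subset_univ s), hs⟩)
  apply le_antisymm
  · apply Finset.sup_le
    intro s hs
    rw [Finset.mem_filter] at hs
    have hanti := hs.2
    by_cases hall : ∀ c ∈ s, ∃ a, i a = c
    · -- s is contained in the range of i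
      set t : Finset α := Finset.univ.filter (fun a => i a ∈ s) with ht
      have hst : s = t.image i := by
        ext c
        simp only [ht, Finset.mem_image, Finset.mem_filter, Finset.mem_univ, true_and]
        constructor
        · intro hc
          obtain ⟨a, ha⟩ := hall c hc
          exact ⟨a, ha ▸ hc, ha⟩
        · rintro ⟨a, has, rfl⟩; exact has
      have hcard : s.card = t.card := by
        rw [hst, Finset.card_image_of_injective _ hi]
      have htanti : ∀ x ∈ t, ∀ y ∈ t, ¬ P.lt x y := by
        intro x hx y hy hl
        simp only [ht, Finset.mem_filter, Finset.mem_univ, true_and] at hx hy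
        exact hanti _ hx _ hy ((liftP x y).mpr hl)
      calc s.card = t.card := hcard
        _ ≤ P.width := widP t htanti
        _ ≤ max P.width Q.width := le_max_left _ _
    · -- there is an element not in the range of i; then s ⊆ range j
      push_neg at hall
      obtain ⟨c, hcs, hcni⟩ := hall
      obtain ⟨b, rfl⟩ := (hcov c).resolve_left (by rintro ⟨a, ha⟩; exact hcni a ha)
      have hbS : b ∉ Q.S := by
        intro hb
        obtain ⟨a, _, hab⟩ := hST b hb
        exact hcni a hab
      have hall' : ∀ c' ∈ s, ∃ b', j b' = c' := by
        intro c' hc'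
        rcases hcov c' with ⟨a, ha⟩ | hb'
        · by_cases haT : a ∈ P.T
          · obtain ⟨b', _, hab⟩ := hTS a haT
            exact ⟨b', hab ▸ ha⟩
          · exfalso
            apply hanti c' hc' (j b) hcs
            rw [hlt]
            exact Or.inr (Or.inr ⟨a, b, ha.symm, rfl, haT, hbS⟩)
        · exact hb'
      set t : Finset β := Finset.univ.filter (fun b' => j b' ∈ s) with ht
      have hst : s = t.image j := by
        ext c'
        simp only [ht, Finset.mem_image, Finset.mem_filter, Finset.mem_univ, true_and]
        constructor
        · intro hc'
          obtain ⟨b', hb'⟩ := hall' c' hc'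
          exact ⟨b', hb' ▸ hc', hb'⟩
        · rintro ⟨b', hbs, rfl⟩; exact hbs
      have hcard : s.card = t.card := by
        rw [hst, Finset.card_image_of_injective _ hj]
      have htanti : ∀ x ∈ t, ∀ y ∈ t, ¬ Q.lt x y := by
        intro x hx y hy hl
        simp only [ht, Finset.mem_filter, Finset.mem_univ, true_and] at hx hy
        exact hanti _ hx _ hy ((liftQ x y).mpr hl)
      calc s.card = t.card := hcard
        _ ≤ Q.width := widQ t htanti
        _ ≤ max P.width Q.width := le_max_right _ _
  · apply max_le
    · apply Finset.sup_le
      intro s hs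
      rw [Finset.mem_filter] at hs
      have : (s.image i).card ≤ R.width := by
        apply widR
        intro x hx y hy hl
        rw [Finset.mem_image] at hx hy
        obtain ⟨a, has, rfl⟩ := hx
        obtain ⟨a', has', rfl⟩ := hy
        exact hs.2 a has a' has' ((liftP a a').mp hl)
      rwa [Finset.card_image_of_injective _ hi] at this
    · apply Finset.sup_le
      intro s hs
      rw [Finset.mem_filter] at hs
      have : (s.image j).card ≤ R.width := by
        apply widR
        intro x hx y hy hl
        rw [Finset.mem_image] at hx hy
        obtain ⟨b, hbs, rfl⟩ := hx
        obtain ⟨b', hbs', rfl⟩ := hy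
        exact hs.2 b hbs b' hbs' ((liftQ b b').mp hl)
      rwa [Finset.card_image_of_injective _ hj] at this
end

section
/- Every ipomset has at most one automorphism, namely the identity: if f : P → P is an isomorphism of labelled iposets (preserving precedence order, event order, labels, and interfaces), then f = id. -/
/-- A labelled iposet with event order: a carrier `α` with a strict precedence
order `lt` and a strict event order `elt` such that any two distinct elements
are comparable by one of them, a labelling, and interfaces `S`, `T` consisting
of minimal resp. maximal elements. -/
structure LIPE (Λ α : Type) where
  lt : α → α → Prop
  lt_irrefl : ∀ x, ¬ lt x x
  lt_trans : ∀ x y z, lt x y → lt y z → lt x z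
  elt : α → α → Prop
  elt_irrefl : ∀ x, ¬ elt x x
  elt_trans : ∀ x y z, elt x y → elt y z → elt x z
  compat : ∀ x y, x ≠ y → lt x y ∨ lt y x ∨ elt x y ∨ elt y x
  lab : α → Λ
  S : Set α
  T : Set α
  S_min : ∀ s ∈ S, ∀ x, ¬ lt x s
  T_max : ∀ t ∈ T, ∀ x, ¬ lt t x

/-- Every labelled iposet has at most one automorphism: any bijection of a
finite labelled iposet preserving (and reflecting) precedence order, event
order, labels, and interfaces is the identity. -/
theorem automorphism_eq_id {Λ α : Type} [Fintype α] (P : LIPE Λ α)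
    (f : α → α) (hbij : Function.Bijective f)
    (hlt : ∀ x y, P.lt x y ↔ P.lt (f x) (f y))
    (helt : ∀ x y, P.elt x y ↔ P.elt (f x) (f y))
    (hlab : ∀ x, P.lab (f x) = P.lab x)
    (hS : f '' P.S = P.S) (hT : f '' P.T = P.T) :
    f = id := by
  funext x
  simp only [id]
  by_contra hne
  obtain ⟨n, hn, hfix⟩ : ∃ n, 0 < n ∧ f^[n] x = x := by
    let g := Equiv.ofBijective f hbij
    refine ⟨orderOf g, orderOf_pos g, ?_⟩
    have h1 : ∀ m, f^[m] x = (g ^ m) x := by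
      intro m
      induction m with
      | zero => simp
      | succ m ih =>
        rw [Function.iterate_succ_apply', ih, pow_succ']
        rfl
    rw [h1, pow_orderOf_eq_one]
    rfl
  have key : ∀ r : α → α → Prop, (∀ a b c, r a b → r b c → r a c) →
      (∀ a b, r a b ↔ r (f a) (f b)) → r x (f x) → r x x := by
    intro r htr hpr hx
    have step : ∀ m, r (f^[m] x) (f^[m + 1] x) := by
      intro m
      induction m with
      | zero => simpa using hx
      | succ m ih =>
        rw [Function.iterate_succ_apply' f m] at ih
        rw [Function.iterate_succ_apply' f (m + 1), Function.iterate_succ_apply' f m]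
        exact (hpr _ _).mp ih
    have chain : ∀ m, r x (f^[m + 1] x) := by
      intro m
      induction m with
      | zero => simpa using hx
      | succ m ih => exact htr _ _ _ ih (step (m + 1))
    have := chain (n - 1)
    rwa [Nat.sub_add_cancel hn, hfix] at this
  rcases P.compat x (f x) (fun h => hne h.symm) with h | h | h | h
  · exact P.lt_irrefl x (key P.lt P.lt_trans hlt h)
  · exact P.lt_irrefl x
      (key (fun a b => P.lt b a) (fun a b c hab hbc => P.lt_trans _ _ _ hbc hab)
        (fun a b => hlt b a) h)
  · exact P.elt_irrefl x (key P.elt P.elt_trans helt h)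
  · exact P.elt_irrefl x
      (key (fun a b => P.elt b a) (fun a b c hab hbc => P.elt_trans _ _ _ hbc hab)
        (fun a b => helt b a) h)
end

section
/- Subsumption of labelled iposets is a preorder: it is reflexive and transitive. Moreover, if P ⊑ Q and Q ⊑ P (mutual subsumption), then P ≅ Q. -/
/-- A subsumption `f : P → Q`: a bijection preserving interfaces and labels,
reflecting precedence, and preserving the essential event order. -/
def IsSubsumption {L a b : Type} (P : LIPE L a) (Q : LIPE L b) (f : a → b) : Prop :=
  Function.Bijective f ∧ f '' P.S = Q.S ∧ f '' P.T = Q.T ∧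
  (∀ x, Q.lab (f x) = P.lab x) ∧
  (∀ x y, Q.lt (f x) (f y) → P.lt x y) ∧
  (∀ x y, P.elt x y → ¬ P.lt x y → ¬ P.lt y x → Q.elt (f x) (f y))

/-- `P ⊑ Q`: there exists a subsumption `P → Q`. -/
def Subsumed {L a b : Type} (P : LIPE L a) (Q : LIPE L b) : Prop :=
  ∃ f : a → b, IsSubsumption P Q f

lemma isSub_id {L a : Type} (P : LIPE L a) : IsSubsumption P P id :=
  ⟨Function.bijective_id, by simp, by simp, fun _ => rfl, fun _ _ h => h, fun _ _ h _ _ => h⟩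

lemma isSub_comp {L a b c : Type} {P : LIPE L a} {Q : LIPE L b} {R : LIPE L c}
    {f : a → b} {g : b → c} (hf : IsSubsumption P Q f) (hg : IsSubsumption Q R g) :
    IsSubsumption P R (g ∘ f) := by
  obtain ⟨bf, sf, tf, lf, ltf, ef⟩ := hf
  obtain ⟨bg, sg, tg, lg, ltg, eg⟩ := hg
  refine ⟨bg.comp bf, ?_, ?_, fun x => by simp [lg, lf], fun x y h => ltf x y (ltg _ _ h), ?_⟩
  · rw [Set.image_comp, sf, sg]
  · rw [Set.image_comp, tf, tg]
  · intro x y he h1 h2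
    exact eg _ _ (ef x y he h1 h2) (fun h => h1 (ltf _ _ h)) (fun h => h2 (ltf _ _ h))

lemma isSub_iterate {L a : Type} {P : LIPE L a} {h : a → a}
    (hh : IsSubsumption P P h) : ∀ k, IsSubsumption P P (h^[k]) := by
  intro k
  induction k with
  | zero => exact isSub_id P
  | succ k ih =>
    rw [Function.iterate_succ]
    exact isSub_comp hh ih

/-- Subsumption of labelled iposets is reflexive and transitive, and mutual
subsumption implies isomorphism (a subsumption which is invertible by a
subsumption). -/
theorem subsumption_preorder {L a b c : Type} [Fintype a] [Fintype b] [Fintype c] :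
    (∀ P : LIPE L a, Subsumed P P) ∧
    (∀ (P : LIPE L a) (Q : LIPE L b) (R : LIPE L c),
      Subsumed P Q → Subsumed Q R → Subsumed P R) ∧
    (∀ (P : LIPE L a) (Q : LIPE L b), Subsumed P Q → Subsumed Q P →
      ∃ (f : a → b) (g : b → a), IsSubsumption P Q f ∧ IsSubsumption Q P g ∧
        Function.LeftInverse g f ∧ Function.RightInverse g f) := by
  refine ⟨fun P => ⟨id, isSub_id P⟩,
    fun P Q R ⟨f, hf⟩ ⟨g, hg⟩ => ⟨g ∘ f, isSub_comp hf hg⟩,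
    fun P Q ⟨f, hf⟩ ⟨g, hg⟩ => ?_⟩
  set h : a → a := g ∘ f with hdef
  have hh : IsSubsumption P P h := isSub_comp hf hg
  classical
  let e : Equiv.Perm a := Equiv.ofBijective h hh.1
  have hpow : ∀ (k : ℕ) (x : a), (e ^ k) x = h^[k] x := by
    intro k
    induction k with
    | zero => intro x; simp
    | succ k ih =>
      intro x
      rw [pow_succ, Function.iterate_succ_apply]
      have : (e ^ k * e) x = (e ^ k) (e x) := rfl
      rw [this, ih]
      rfl
  set n := orderOf e with ndef
  have hnpos : 0 < n := orderOf_pos e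
  have hid : ∀ x, h^[n] x = x := by
    intro x
    rw [← hpow]
    rw [pow_orderOf_eq_one e]
    rfl
  refine ⟨f, h^[n-1] ∘ g, hf, isSub_comp hg (isSub_iterate hh (n-1)), ?_, ?_⟩
  · intro x
    have : (h^[n-1] ∘ g) (f x) = h^[n-1] (h x) := rfl
    rw [this, ← Function.iterate_succ_apply, Nat.succ_eq_add_one, Nat.sub_add_cancel hnpos]
    exact hid x
  · intro y
    obtain ⟨x, rfl⟩ := hf.1.2 y
    show f ((h^[n-1] ∘ g) (f x)) = f x
    congr 1
    have : (h^[n-1] ∘ g) (f x) = h^[n-1] (h x) := rfl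
    rw [this, ← Function.iterate_succ_apply, Nat.succ_eq_add_one, Nat.sub_add_cancel hnpos]
    exact hid x
end

section
/- Interval orders compose under gluing: if labelled iposets P and Q each admit an interval representation and T_P ≅ S_Q, then P * Q admits an interval representation. -/
attribute [local instance] Classical.propDecidable

/-- `P` admits an interval representation. -/
def HasIntervalRep {Λ α : Type} (P : LIP Λ α) : Prop :=
  ∃ b e : α → ℝ, (∀ x, b x ≤ e x) ∧ (∀ x y, P.lt x y ↔ e x < b y)

/-- Interval orders compose under gluing: if `P` and `Q` admit interval
representations and `R` is a gluing composition `P * Q`, then `R` admits an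
interval representation. -/
theorem glue_interval {Λ α β γ : Type} [Fintype α] [Fintype β] [Fintype γ]
    (P : LIP Λ α) (Q : LIP Λ β) (R : LIP Λ γ) (i : α → γ) (j : β → γ)
    (hP : HasIntervalRep P) (hQ : HasIntervalRep Q)
    (h : IsGluing P Q R i j) : HasIntervalRep R := by
  obtain ⟨bP, eP, hbeP, hltP⟩ := hP
  obtain ⟨bQ, eQ, hbeQ, hltQ⟩ := hQ
  obtain ⟨hi, hj, hcov, hij, hTmatch, hSmatch, -, hlt, -, -, -, -⟩ := h
  -- order embeddings of ℝ into (-1,0) and (0,1)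
  set φ : ℝ → ℝ := fun x => ((orderIsoIooNegOneOne ℝ x : ℝ)) with hφ
  have hφlt : ∀ x y, φ x < φ y ↔ x < y := by
    intro x y
    simp only [hφ]
    rw [Subtype.coe_lt_coe]
    exact (orderIsoIooNegOneOne ℝ).lt_iff_lt
  have hφmem : ∀ x, -1 < φ x ∧ φ x < 1 := fun x => (orderIsoIooNegOneOne ℝ x).2
  set F : ℝ → ℝ := fun x => (φ x - 1) / 2 with hF
  set G : ℝ → ℝ := fun x => (φ x + 1) / 2 with hG
  have hF0 : ∀ x, F x < 0 := fun x => by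
    have := (hφmem x).2; simp only [hF]; linarith
  have hG0 : ∀ x, 0 < G x := fun x => by
    have := (hφmem x).1; simp only [hG]; linarith
  have hFlt : ∀ x y, F x < F y ↔ x < y := by
    intro x y; simp only [hF]; rw [div_lt_div_iff_of_pos_right (by norm_num : (0:ℝ) < 2)]
    constructor
    · intro hxy; exact (hφlt x y).1 (by linarith)
    · intro hxy; have := (hφlt x y).2 hxy; linarith
  have hGlt : ∀ x y, G x < G y ↔ x < y := by
    intro x y; simp only [hG]; rw [div_lt_div_iff_of_pos_right (by norm_num : (0:ℝ) < 2)]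
    constructor
    · intro hxy; exact (hφlt x y).1 (by linarith)
    · intro hxy; have := (hφlt x y).2 hxy; linarith
  have hFle : ∀ x y, x ≤ y → F x ≤ F y := by
    intro x y hxy
    rcases eq_or_lt_of_le hxy with rfl | hxy
    · exact le_rfl
    · exact le_of_lt ((hFlt x y).2 hxy)
  have hGle : ∀ x y, x ≤ y → G x ≤ G y := by
    intro x y hxy
    rcases eq_or_lt_of_le hxy with rfl | hxy
    · exact le_rfl
    · exact le_of_lt ((hGlt x y).2 hxy)
  have hFG : ∀ x y, F x < G y := fun x y => (hF0 x).trans (hG0 y)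
  -- the representation
  set b : γ → ℝ := fun c =>
    if h : ∃ a, i a = c then F (bP h.choose)
    else G (bQ ((hcov c).resolve_left h).choose) with hbdef
  set e : γ → ℝ := fun c =>
    if h : ∃ b', j b' = c then G (eQ h.choose)
    else F (eP ((hcov c).resolve_right h).choose) with hedef
  -- evaluation lemmas
  have hb_i : ∀ a, b (i a) = F (bP a) := by
    intro a
    have hex : ∃ a', i a' = i a := ⟨a, rfl⟩
    simp only [hbdef, dif_pos hex]
    rw [hi hex.choose_spec]
  have he_j : ∀ b', e (j b') = G (eQ b') := by
    intro b'
    have hex : ∃ b'', j b'' = j b' := ⟨b', rfl⟩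
    simp only [hedef, dif_pos hex]
    rw [hj hex.choose_spec]
  have he_i : ∀ a, a ∉ P.T → e (i a) = F (eP a) := by
    intro a haT
    have hnex : ¬ ∃ b', j b' = i a := by
      rintro ⟨b', hb'⟩; exact haT (hij a b' hb'.symm).1
    simp only [hedef, dif_neg hnex]
    have := ((hcov (i a)).resolve_right hnex).choose_spec
    rw [hi this]
  have hb_j : ∀ b', b' ∉ Q.S → b (j b') = G (bQ b') := by
    intro b' hbS
    have hnex : ¬ ∃ a, i a = j b' := by
      rintro ⟨a, ha⟩; exact hbS (hij a b' ha).2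
    simp only [hbdef, dif_neg hnex]
    have := ((hcov (j b')).resolve_left hnex).choose_spec
    rw [hj this]
  refine ⟨b, e, ?_, ?_⟩
  · -- b ≤ e
    intro c
    by_cases hx : ∃ a, i a = c
    · obtain ⟨a, rfl⟩ := hx
      rw [hb_i]
      by_cases haT : a ∈ P.T
      · obtain ⟨b', hb'S, hab⟩ := hTmatch a haT
        rw [hab, he_j]
        exact le_of_lt (hFG _ _)
      · rw [he_i a haT]
        exact hFle _ _ (hbeP a)
    · obtain ⟨b', rfl⟩ := (hcov c).resolve_left hx
      have hbS : b' ∉ Q.S := by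
        intro hS
        obtain ⟨a, -, ha⟩ := hSmatch b' hS
        exact hx ⟨a, ha⟩
      rw [hb_j b' hbS, he_j]
      exact hGle _ _ (hbeQ b')
  · -- the order iff
    intro x y
    rw [hlt]
    constructor
    · rintro (⟨a, a', rfl, rfl, hlt'⟩ | ⟨b', b'', rfl, rfl, hlt'⟩ | ⟨a, b', rfl, rfl, haT, hbS⟩)
      · have haT : a ∉ P.T := fun hT => P.T_max a hT a' hlt'
        rw [he_i a haT, hb_i]
        exact (hFlt _ _).2 ((hltP a a').1 hlt')
      · have hbS : b'' ∉ Q.S := fun hS => Q.S_min b'' hS b' hlt'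
        rw [he_j, hb_j b'' hbS]
        exact (hGlt _ _).2 ((hltQ b' b'').1 hlt')
      · rw [he_i a haT, hb_j b' hbS]
        exact hFG _ _
    · intro hxy
      by_cases hx : ∃ a, i a = x
      · obtain ⟨a, rfl⟩ := hx
        by_cases hy : ∃ a', i a' = y
        · obtain ⟨a', rfl⟩ := hy
          rw [hb_i] at hxy
          by_cases haT : a ∈ P.T
          · obtain ⟨b', hb'S, hab⟩ := hTmatch a haT
            rw [hab, he_j] at hxy
            exact absurd hxy (not_lt.2 (le_of_lt (hFG _ _)))
          · rw [he_i a haT] at hxy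
            exact Or.inl ⟨a, a', rfl, rfl, (hltP a a').2 ((hFlt _ _).1 hxy)⟩
        · obtain ⟨b', rfl⟩ := (hcov y).resolve_left hy
          have hbS : b' ∉ Q.S := by
            intro hS
            obtain ⟨a', -, ha'⟩ := hSmatch b' hS
            exact hy ⟨a', ha'⟩
          rw [hb_j b' hbS] at hxy
          by_cases haT : a ∈ P.T
          · obtain ⟨bx, hbxS, hab⟩ := hTmatch a haT
            rw [hab, he_j] at hxy
            exact Or.inr (Or.inl ⟨bx, b', hab, rfl, (hltQ bx b').2 ((hGlt _ _).1 hxy)⟩)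
          · exact Or.inr (Or.inr ⟨a, b', rfl, rfl, haT, hbS⟩)
      · obtain ⟨b', rfl⟩ := (hcov x).resolve_left hx
        have hbS : b' ∉ Q.S := by
          intro hS
          obtain ⟨a', -, ha'⟩ := hSmatch b' hS
          exact hx ⟨a', ha'⟩
        rw [he_j] at hxy
        by_cases hy : ∃ a', i a' = y
        · obtain ⟨a', rfl⟩ := hy
          rw [hb_i] at hxy
          exact absurd hxy (not_lt.2 (le_of_lt (hFG _ _)))
        · obtain ⟨b'', rfl⟩ := (hcov y).resolve_left hy
          have hbS' : b'' ∉ Q.S := by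
            intro hS
            obtain ⟨a', -, ha'⟩ := hSmatch b'' hS
            exact hy ⟨a', ha'⟩
          rw [hb_j b'' hbS'] at hxy
          exact Or.inr (Or.inl ⟨b', b'', rfl, rfl, (hltQ b' b'').2 ((hGlt _ _).1 hxy)⟩)
end
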